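/- Let 𝕂 be a non-discrete Hausdorff topological field, E, F Hausdorff topological 𝕂-vector spaces, N ⊆ E a closed subspace with quotient map q : E → E/N, U₁ ⊆ E/N open, and U ⊆ E open with q(U) = U₁. If f₁ : U₁ → F is a map such that f := f₁ ∘ q|_U is continuous, then f₁ is continuous. More generally, if f is C¹ in the BGN sense, then f₁ is C¹ in the BGN sense. -/

import Mathlib

open Filter Topology Set

/-- Lemma 10.4 of Bertram–Glöckner–Neeb (cases k = 0, 1): let `N ⊆ E` be a closed subspace
with quotient map `q : E → E/N`, `U₁ ⊆ E/N` open, and `U ⊆ E` open with `q(U) = U₁`.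
If `f := f₁ ∘ q|_U` is continuous, then `f₁` is continuous on `U₁`; and if `f` is C¹ in the
BGN sense (admits a continuous difference-quotient map on `U⁽¹⁾`), then so is `f₁` on `U₁`. -/
theorem stmt_19 (𝕂 : Type*) [Field 𝕂] [TopologicalSpace 𝕂] [IsTopologicalRing 𝕂] [T2Space 𝕂]
    (hK : Dense {t : 𝕂 | t ≠ 0})
    (E F : Type*) [AddCommGroup E] [Module 𝕂 E] [TopologicalSpace E]
    [IsTopologicalAddGroup E] [ContinuousSMul 𝕂 E] [T2Space E]
    [AddCommGroup F] [Module 𝕂 F] [TopologicalSpace F]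
    [IsTopologicalAddGroup F] [ContinuousSMul 𝕂 F] [T2Space F]
    (N : Submodule 𝕂 E) (hN : IsClosed (N : Set E))
    (U₁ : Set (E ⧸ N)) (hU₁ : IsOpen U₁)
    (U : Set E) (hU : IsOpen U) (himg : N.mkQ '' U = U₁)
    (f₁ : E ⧸ N → F) :
    -- C⁰ case:
    (ContinuousOn (fun x : E => f₁ (N.mkQ x)) U → ContinuousOn f₁ U₁) ∧
    -- C¹ case:
    ((ContinuousOn (fun x : E => f₁ (N.mkQ x)) U ∧
        ∃ g : E × E × 𝕂 → F,
          ContinuousOn g {p : E × E × 𝕂 | p.1 ∈ U ∧ p.1 + p.2.2 • p.2.1 ∈ U} ∧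
          ∀ p : E × E × 𝕂, p.1 ∈ U → p.1 + p.2.2 • p.2.1 ∈ U →
            f₁ (N.mkQ (p.1 + p.2.2 • p.2.1)) - f₁ (N.mkQ p.1) = p.2.2 • g p) →
      (ContinuousOn f₁ U₁ ∧
        ∃ g₁ : (E ⧸ N) × (E ⧸ N) × 𝕂 → F,
          ContinuousOn g₁
            {p : (E ⧸ N) × (E ⧸ N) × 𝕂 | p.1 ∈ U₁ ∧ p.1 + p.2.2 • p.2.1 ∈ U₁} ∧
          ∀ p : (E ⧸ N) × (E ⧸ N) × 𝕂, p.1 ∈ U₁ → p.1 + p.2.2 • p.2.1 ∈ U₁ →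
            f₁ (p.1 + p.2.2 • p.2.1) - f₁ p.1 = p.2.2 • g₁ p)) := by
  classical
  have hqo : IsOpenMap N.mkQ := N.isOpenMap_mkQ
  -- C⁰ case
  have c0 : ContinuousOn (fun x : E => f₁ (N.mkQ x)) U → ContinuousOn f₁ U₁ := by
    intro hf x₁ hx₁
    rw [← himg] at hx₁
    obtain ⟨x, hxU, rfl⟩ := hx₁
    apply ContinuousAt.continuousWithinAt
    rw [ContinuousAt, Filter.tendsto_def]
    intro V hV
    have h1 : (fun x : E => f₁ (N.mkQ x)) ⁻¹' V ∈ 𝓝 x :=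
      (hf.continuousAt (hU.mem_nhds hxU)) hV
    refine Filter.mem_of_superset (hqo.image_mem_nhds h1) ?_
    rintro y₁ ⟨y, hy, rfl⟩
    exact hy
  refine ⟨c0, ?_⟩
  rintro ⟨hf, g, hg, hgeq⟩
  refine ⟨c0 hf, ?_⟩
  set D : Set (E × E × 𝕂) := {p : E × E × 𝕂 | p.1 ∈ U ∧ p.1 + p.2.2 • p.2.1 ∈ U} with hDdef
  set D₁ : Set ((E ⧸ N) × (E ⧸ N) × 𝕂) :=
    {p : (E ⧸ N) × (E ⧸ N) × 𝕂 | p.1 ∈ U₁ ∧ p.1 + p.2.2 • p.2.1 ∈ U₁} with hD₁def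
  have hD : IsOpen D := by
    have h1 : IsOpen {p : E × E × 𝕂 | p.1 ∈ U} := hU.preimage continuous_fst
    have h2 : IsOpen {p : E × E × 𝕂 | p.1 + p.2.2 • p.2.1 ∈ U} := hU.preimage (by fun_prop)
    exact h1.inter h2
  -- value of g at nonzero t is determined by f₁ and the images under mkQ
  have hgval : ∀ p : E × E × 𝕂, p ∈ D → p.2.2 ≠ 0 →
      g p = p.2.2⁻¹ • (f₁ (N.mkQ p.1 + p.2.2 • N.mkQ p.2.1) - f₁ (N.mkQ p.1)) := by
    intro p hp ht
    have h := hgeq p hp.1 hp.2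
    rw [map_add, map_smul] at h
    rw [h, inv_smul_smul₀ ht]
  -- g is constant on fibers of mkQ × mkQ × id within D
  have hconst : ∀ p p' : E × E × 𝕂, p ∈ D → p' ∈ D →
      N.mkQ p.1 = N.mkQ p'.1 → N.mkQ p.2.1 = N.mkQ p'.2.1 → p.2.2 = p'.2.2 →
      g p = g p' := by
    rintro ⟨x, v, t⟩ ⟨x', v', t'⟩ hp hp' h1 h2 h3
    dsimp only at h1 h2 h3 ⊢
    subst h3
    by_cases ht : t = 0
    · subst ht
      have hxU : x ∈ U := hp.1
      have hx'U : x' ∈ U := hp'.1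
      set T : Set 𝕂 := {s : 𝕂 | x + s • v ∈ U ∧ x' + s • v' ∈ U} with hTdef
      have hTo : IsOpen T := by
        have ha : IsOpen {s : 𝕂 | x + s • v ∈ U} := hU.preimage (by fun_prop)
        have hb : IsOpen {s : 𝕂 | x' + s • v' ∈ U} := hU.preimage (by fun_prop)
        exact ha.inter hb
      have h0T : (0 : 𝕂) ∈ T := by
        constructor <;> simp [hxU, hx'U]
      set S : Set 𝕂 := T ∩ {s : 𝕂 | s ≠ 0} with hSdef
      have h0cl : (0 : 𝕂) ∈ closure S := hK.open_subset_closure_inter hTo h0T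
      have hneb : (𝓝[S] (0 : 𝕂)).NeBot := mem_closure_iff_nhdsWithin_neBot.1 h0cl
      have hmemD : ∀ s ∈ T, ((x, v, s) : E × E × 𝕂) ∈ D := fun s hs => ⟨hxU, hs.1⟩
      have hmemD' : ∀ s ∈ T, ((x', v', s) : E × E × 𝕂) ∈ D := fun s hs => ⟨hx'U, hs.2⟩
      have hcm : Continuous (fun s : 𝕂 => ((x, v, s) : E × E × 𝕂)) := by fun_prop
      have hcm' : Continuous (fun s : 𝕂 => ((x', v', s) : E × E × 𝕂)) := by fun_prop
      have hc : ContinuousAt (fun s : 𝕂 => g (x, v, s)) 0 :=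
        ContinuousAt.comp (hg.continuousAt (hD.mem_nhds hp)) hcm.continuousAt
      have hc' : ContinuousAt (fun s : 𝕂 => g (x', v', s)) 0 :=
        ContinuousAt.comp (hg.continuousAt (hD.mem_nhds hp')) hcm'.continuousAt
      have t1 : Tendsto (fun s : 𝕂 => g (x, v, s)) (𝓝[S] 0) (𝓝 (g (x, v, 0))) :=
        hc.tendsto.mono_left nhdsWithin_le_nhds
      have t2 : Tendsto (fun s : 𝕂 => g (x', v', s)) (𝓝[S] 0) (𝓝 (g (x', v', 0))) :=
        hc'.tendsto.mono_left nhdsWithin_le_nhds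
      have heqS : ∀ s ∈ S, g (x, v, s) = g (x', v', s) := by
        rintro s ⟨hsT, hs0⟩
        have e1 := hgval (x, v, s) (hmemD s hsT) hs0
        have e2 := hgval (x', v', s) (hmemD' s hsT) hs0
        dsimp only at e1 e2
        rw [e1, e2, h1, h2]
      have t2' : Tendsto (fun s : 𝕂 => g (x, v, s)) (𝓝[S] 0) (𝓝 (g (x', v', 0))) := by
        refine t2.congr' ?_
        filter_upwards [self_mem_nhdsWithin] with s hs
        exact (heqS s hs).symm
      exact tendsto_nhds_unique t1 t2'
    · have e1 := hgval (x, v, t) hp ht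
      have e2 := hgval (x', v', t) hp' ht
      dsimp only at e1 e2
      rw [e1, e2, h1, h2]
  -- surjectivity of (mkQ × mkQ × id) from D onto D₁
  have hsurj : ∀ p₁ : (E ⧸ N) × (E ⧸ N) × 𝕂, p₁ ∈ D₁ →
      ∃ p : E × E × 𝕂, p ∈ D ∧ N.mkQ p.1 = p₁.1 ∧ N.mkQ p.2.1 = p₁.2.1 ∧ p.2.2 = p₁.2.2 := by
    rintro ⟨x₁, v₁, t⟩ ⟨hx₁, hx₁'⟩
    dsimp only at hx₁ hx₁' ⊢
    rw [← himg] at hx₁ hx₁'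
    obtain ⟨x, hxU, hqx⟩ := hx₁
    obtain ⟨y, hyU, hqy⟩ := hx₁'
    by_cases ht : t = 0
    · obtain ⟨v, hv⟩ := N.mkQ_surjective v₁
      refine ⟨(x, v, t), ⟨hxU, ?_⟩, hqx, hv, rfl⟩
      simpa [ht] using hxU
    · refine ⟨(x, t⁻¹ • (y - x), t), ⟨hxU, ?_⟩, hqx, ?_, rfl⟩
      · have : x + t • (t⁻¹ • (y - x)) = y := by
          rw [smul_inv_smul₀ ht]; abel
        rw [this]; exact hyU
      · rw [map_smul, map_sub, hqx, hqy]
        rw [add_sub_cancel_left, inv_smul_smul₀ ht]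
  choose sec hsecD hsec1 hsec2 hsec3 using hsurj
  set g₁ : (E ⧸ N) × (E ⧸ N) × 𝕂 → F :=
    fun p₁ => if h : p₁ ∈ D₁ then g (sec p₁ h) else 0 with hg₁def
  have hg₁val : ∀ p₁ (h : p₁ ∈ D₁), g₁ p₁ = g (sec p₁ h) := fun p₁ h => dif_pos h
  refine ⟨g₁, ?_, ?_⟩
  · -- continuity of g₁ on D₁
    intro p₁ hp₁
    apply ContinuousAt.continuousWithinAt
    rw [ContinuousAt, Filter.tendsto_def]
    intro V hV
    rw [hg₁val p₁ hp₁] at hV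
    have hp : sec p₁ hp₁ ∈ D := hsecD p₁ hp₁
    have h1 : g ⁻¹' V ∈ 𝓝 (sec p₁ hp₁) := (hg.continuousAt (hD.mem_nhds hp)) hV
    have h2 : g ⁻¹' V ∩ D ∈ 𝓝 (sec p₁ hp₁) := Filter.inter_mem h1 (hD.mem_nhds hp)
    set Q : E × E × 𝕂 → (E ⧸ N) × (E ⧸ N) × 𝕂 := Prod.map N.mkQ (Prod.map N.mkQ id) with hQdef
    have hQo : IsOpenMap Q := hqo.prodMap (hqo.prodMap IsOpenMap.id)
    have hQp : Q (sec p₁ hp₁) = p₁ := by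
      rw [Prod.ext_iff, Prod.ext_iff]
      exact ⟨hsec1 p₁ hp₁, hsec2 p₁ hp₁, hsec3 p₁ hp₁⟩
    have h3 : Q '' (g ⁻¹' V ∩ D) ∈ 𝓝 p₁ := hQp ▸ hQo.image_mem_nhds h2
    refine Filter.mem_of_superset h3 ?_
    rintro y₁ ⟨y, ⟨hyV, hyD⟩, rfl⟩
    have hQyD₁ : Q y ∈ D₁ := by
      constructor
      · exact himg ▸ ⟨y.1, hyD.1, rfl⟩
      · show N.mkQ y.1 + y.2.2 • N.mkQ y.2.1 ∈ U₁
        rw [← map_smul, ← map_add]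
        exact himg ▸ ⟨y.1 + y.2.2 • y.2.1, hyD.2, rfl⟩
    rw [Set.mem_preimage, hg₁val (Q y) hQyD₁]
    have heq : g (sec (Q y) hQyD₁) = g y :=
      hconst _ y (hsecD _ hQyD₁) hyD (hsec1 _ hQyD₁) (hsec2 _ hQyD₁) (hsec3 _ hQyD₁)
    rw [heq]; exact hyV
  · -- difference-quotient equation for g₁
    rintro ⟨x₁, v₁, t⟩ h1 h2
    have hmem : ((x₁, v₁, t) : (E ⧸ N) × (E ⧸ N) × 𝕂) ∈ D₁ := ⟨h1, h2⟩
    rw [hg₁val _ hmem]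
    set p := sec (x₁, v₁, t) hmem with hpdef
    have hp : p ∈ D := hsecD _ hmem
    have e := hgeq p hp.1 hp.2
    rw [map_add, map_smul, hsec1 _ hmem, hsec2 _ hmem, hsec3 _ hmem] at e
    exact e
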